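/- For the matrix B with entries B^{uv,w}_{ab,c} = (1/((1+δ_{ab})(1+δ_{uv}))) { y^{bw}(y^{au}y^{cv}+y^{av}y^{cu}) + y^{aw}(y^{bu}y^{cv}+y^{bv}y^{cu}) − y^{ab}(y^{cu}y^{vw}+y^{cv}y^{uw}) − y^{uv}(y^{aw}y^{bc}+y^{ac}y^{bw}) − (y^{ua}y^{vb}+y^{ub}y^{va})y^{wc} + 2 y^{ab}y^{uv}y^{wc} }, evaluated at the standard diagonal form y^{ij} = ε_i δ_{ij} (ε_i = ±1) with n ≥ 3, the matrix B (indexed by pairs (a ≤ b, c) and (u ≤ v, w)) is invertible. -/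
import Mathlib


open Finset

lemma half_sum {n : ℕ} (g : Fin n × Fin n → ℝ) (hg : ∀ u v : Fin n, g (u, v) = g (v, u)) :
    ∑ q : {q : Fin n × Fin n // q.1 ≤ q.2},
        (if q.1.1 = q.1.2 then g q.1 else 2 * g q.1)
      = ∑ p : Fin n × Fin n, g p := by
  have h1 : ∑ q : {q : Fin n × Fin n // q.1 ≤ q.2},
      (if q.1.1 = q.1.2 then g q.1 else 2 * g q.1)
      = ∑ p ∈ Finset.univ.filter (fun p : Fin n × Fin n => p.1 ≤ p.2),
          (if p.1 = p.2 then g p else 2 * g p) := by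
    exact (Finset.sum_subtype (Finset.univ.filter (fun p : Fin n × Fin n => p.1 ≤ p.2))
      (fun p => by simp) (fun p => if p.1 = p.2 then g p else 2 * g p)).symm
  rw [h1]
  have h2 : ∀ p : Fin n × Fin n, (if p.1 = p.2 then g p else 2 * g p)
      = g p + (if ¬ p.1 = p.2 then g p else 0) := by
    intro p; split_ifs <;> ring
  simp_rw [h2, Finset.sum_add_distrib]
  rw [← Finset.sum_filter, Finset.filter_filter]
  have h4 : Finset.univ.filter (fun p : Fin n × Fin n => p.1 ≤ p.2 ∧ ¬ p.1 = p.2)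
      = Finset.univ.filter (fun p : Fin n × Fin n => p.1 < p.2) := by
    apply Finset.filter_congr
    intro p _
    simp [lt_iff_le_and_ne]
  rw [h4]
  have h5 : ∑ p : Fin n × Fin n, g p
      = ∑ p ∈ Finset.univ.filter (fun p : Fin n × Fin n => p.1 ≤ p.2), g p
        + ∑ p ∈ Finset.univ.filter (fun p : Fin n × Fin n => ¬ p.1 ≤ p.2), g p := by
    rw [Finset.sum_filter_add_sum_filter_not]
  rw [h5]
  congr 1
  apply Finset.sum_nbij' (fun p => (p.2, p.1)) (fun p => (p.2, p.1)) <;>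
    simp_all [Finset.mem_filter, lt_iff_le_and_ne, not_le] <;> intros <;>
    first
      | (rename_i p h; exact ⟨le_of_lt h, ne_of_lt h⟩)
      | skip

lemma contract {n : ℕ} (ε : Fin n → ℝ)
    (Y : Fin n → Fin n → ℝ) (hY : ∀ i j, Y i j = if i = j then ε i else 0)
    (X : Fin n → Fin n → Fin n → ℝ) (hXs : ∀ i j k, X j i k = X i j k)
    (a b c : Fin n) :
    ∑ w, ∑ u, ∑ v,
      (Y b w * (Y a u * Y c v + Y a v * Y c u)
       + Y a w * (Y b u * Y c v + Y b v * Y c u)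
       - Y a b * (Y c u * Y v w + Y c v * Y u w)
       - Y u v * (Y a w * Y b c + Y a c * Y b w)
       - (Y u a * Y v b + Y u b * Y v a) * Y w c
       + 2 * Y a b * Y u v * Y w c) * X u v w
    = 2 * ε a * ε b * ε c * (X a c b + X b c a - X a b c)
      - 2 * (if a = b then ε a * ε c * ((∑ j, ε j * X c j j) - (∑ j, ε j * X j j c)) else 0)
      - ε a * ε b * ((if b = c then (∑ j, ε j * X j j a) else 0)
                     + (if a = c then (∑ j, ε j * X j j b) else 0)) := by
  simp only [hY, ite_mul, mul_ite, zero_mul, mul_zero, add_mul, mul_add, sub_mul,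
    Finset.sum_add_distrib, Finset.sum_sub_distrib, Finset.sum_ite_eq, Finset.sum_ite_eq',
    Finset.mem_univ, if_true, Finset.sum_ite_irrel, Finset.sum_const_zero,
    Finset.mul_sum, Finset.sum_mul]
  have e2 : ∑ x : Fin n, ε a * (ε c * ε x) * X x c x
      = ∑ x : Fin n, ε a * (ε c * ε x) * X c x x :=
    Finset.sum_congr rfl fun x _ => by rw [hXs c x x]
  have e1 : ∑ x : Fin n, ε a * (ε c * ε x) * X c x x
      = ε a * ε c * ∑ j : Fin n, ε j * X c j j := by
    rw [Finset.mul_sum]; exact Finset.sum_congr rfl fun x _ => by ring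
  have e3 : ∑ x : Fin n, ε x * (ε a * ε b) * X x x a
      = ε a * ε b * ∑ j : Fin n, ε j * X j j a := by
    rw [Finset.mul_sum]; exact Finset.sum_congr rfl fun x _ => by ring
  have e4 : ∑ x : Fin n, ε x * (ε a * ε b) * X x x b
      = ε a * ε b * ∑ j : Fin n, ε j * X j j b := by
    rw [Finset.mul_sum]; exact Finset.sum_congr rfl fun x _ => by ring
  have e5 : ∑ x : Fin n, 2 * ε a * ε x * ε c * X x x c
      = 2 * ε a * ε c * ∑ j : Fin n, ε j * X j j c := by
    rw [Finset.mul_sum]; exact Finset.sum_congr rfl fun x _ => by ring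
  have e3' : ∑ i : Fin n, ε a * ε b * (ε i * X i i a)
      = ε a * ε b * ∑ j : Fin n, ε j * X j j a := by
    rw [Finset.mul_sum]
  have e4' : ∑ i : Fin n, ε a * ε b * (ε i * X i i b)
      = ε a * ε b * ∑ j : Fin n, ε j * X j j b := by
    rw [Finset.mul_sum]
  rw [e2, e1, e3, e4, e5, e3', e4', hXs a c b, hXs b c a, hXs a b c]
  split_ifs <;> ring


set_option maxHeartbeats 1600000 in
open Finset in
/-- The Hessian matrix `B` of the first-order Lagrangian `L^∇`, with entries
given by the displayed formula, evaluated at the standard diagonal metric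
`y^{ij} = ε_i δ_{ij}` (with `ε_i = ±1`, `n ≥ 3`), indexed by pairs
`(a ≤ b, c)` (rows) and `(u ≤ v, w)` (columns), is invertible. -/
theorem hessian_invertible {n : ℕ} (hn : 3 ≤ n)
    (ε : Fin n → ℝ) (hε : ∀ a, ε a = 1 ∨ ε a = -1)
    (Y : Fin n → Fin n → ℝ) (hY : ∀ i j, Y i j = if i = j then ε i else 0)
    (δ : Fin n → Fin n → ℝ) (hδ : ∀ i j, δ i j = if i = j then 1 else 0)
    (B : Matrix ({q : Fin n × Fin n // q.1 ≤ q.2} × Fin n)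
               ({q : Fin n × Fin n // q.1 ≤ q.2} × Fin n) ℝ)
    (hB : ∀ (row col : {q : Fin n × Fin n // q.1 ≤ q.2} × Fin n),
      B row col =
        (1 / ((1 + δ row.1.1.1 row.1.1.2) * (1 + δ col.1.1.1 col.1.1.2))) *
        (let a := row.1.1.1; let b := row.1.1.2; let c := row.2
         let u := col.1.1.1; let v := col.1.1.2; let w := col.2
         Y b w * (Y a u * Y c v + Y a v * Y c u)
         + Y a w * (Y b u * Y c v + Y b v * Y c u)
         - Y a b * (Y c u * Y v w + Y c v * Y u w)
         - Y u v * (Y a w * Y b c + Y a c * Y b w)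
         - (Y u a * Y v b + Y u b * Y v a) * Y w c
         + 2 * Y a b * Y u v * Y w c)) :
    B.det ≠ 0 := by
  intro hdet
  obtain ⟨z, hz0, hz⟩ := Matrix.exists_mulVec_eq_zero_iff.mpr hdet
  apply hz0
  have hε2 : ∀ i, ε i * ε i = 1 := fun i => by rcases hε i with h | h <;> rw [h] <;> norm_num
  set X : Fin n → Fin n → Fin n → ℝ :=
    fun i j k => z (⟨(i ⊓ j, i ⊔ j), inf_le_sup⟩, k) with hX
  have hXs : ∀ i j k, X j i k = X i j k := by
    intro i j k
    simp only [hX]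
    have h : (⟨(j ⊓ i, j ⊔ i), inf_le_sup⟩ : {q : Fin n × Fin n // q.1 ≤ q.2})
        = ⟨(i ⊓ j, i ⊔ j), inf_le_sup⟩ :=
      Subtype.ext (Prod.ext (inf_comm j i) (sup_comm j i))
    rw [h]
  have hXz : ∀ (a b : Fin n) (hab : a ≤ b) (k : Fin n),
      z (⟨(a, b), hab⟩, k) = X a b k := by
    intro a b hab k
    have h : (⟨(a, b), hab⟩ : {q : Fin n × Fin n // q.1 ≤ q.2})
        = ⟨(a ⊓ b, a ⊔ b), inf_le_sup⟩ :=
      Subtype.ext (by simp [inf_eq_left.mpr hab, sup_eq_right.mpr hab])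
    rw [h]
  -- the key vanishing of the contracted sum, for a ≤ b
  have key : ∀ (a b : Fin n), a ≤ b → ∀ c : Fin n,
      (∑ w, ∑ u, ∑ v,
        (Y b w * (Y a u * Y c v + Y a v * Y c u)
         + Y a w * (Y b u * Y c v + Y b v * Y c u)
         - Y a b * (Y c u * Y v w + Y c v * Y u w)
         - Y u v * (Y a w * Y b c + Y a c * Y b w)
         - (Y u a * Y v b + Y u b * Y v a) * Y w c
         + 2 * Y a b * Y u v * Y w c) * X u v w) = 0 := by
    intro a b hab c
    have h0 := congrFun hz (⟨(a, b), hab⟩, c)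
    simp only [Matrix.mulVec, dotProduct, Pi.zero_apply] at h0
    rw [Fintype.sum_prod_type, Finset.sum_comm] at h0
    have hw : ∀ w : Fin n,
        (∑ q : {q : Fin n × Fin n // q.1 ≤ q.2}, B (⟨(a, b), hab⟩, c) (q, w) * z (q, w))
        = (1 / (1 + δ a b)) * (1 / 2) *
            ∑ u, ∑ v,
              (Y b w * (Y a u * Y c v + Y a v * Y c u)
               + Y a w * (Y b u * Y c v + Y b v * Y c u)
               - Y a b * (Y c u * Y v w + Y c v * Y u w)
               - Y u v * (Y a w * Y b c + Y a c * Y b w)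
               - (Y u a * Y v b + Y u b * Y v a) * Y w c
               + 2 * Y a b * Y u v * Y w c) * X u v w := by
      intro w
      have hg : ∀ u v' : Fin n,
          (1 / (1 + δ a b)) * (1 / 2) *
            ((Y b w * (Y a u * Y c v' + Y a v' * Y c u)
              + Y a w * (Y b u * Y c v' + Y b v' * Y c u)
              - Y a b * (Y c u * Y v' w + Y c v' * Y u w)
              - Y u v' * (Y a w * Y b c + Y a c * Y b w)
              - (Y u a * Y v' b + Y u b * Y v' a) * Y w c
              + 2 * Y a b * Y u v' * Y w c) * X u v' w)
          = (1 / (1 + δ a b)) * (1 / 2) *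
            ((Y b w * (Y a v' * Y c u + Y a u * Y c v')
              + Y a w * (Y b v' * Y c u + Y b u * Y c v')
              - Y a b * (Y c v' * Y u w + Y c u * Y v' w)
              - Y v' u * (Y a w * Y b c + Y a c * Y b w)
              - (Y v' a * Y u b + Y v' b * Y u a) * Y w c
              + 2 * Y a b * Y v' u * Y w c) * X v' u w) := by
        intro u v'
        rw [hXs u v' w, hY u v', hY v' u]
        by_cases h : u = v'
        · subst h; ring
        · rw [if_neg h, if_neg (Ne.symm h)]; ring
      calc ∑ q : {q : Fin n × Fin n // q.1 ≤ q.2}, B (⟨(a, b), hab⟩, c) (q, w) * z (q, w)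
          = ∑ q : {q : Fin n × Fin n // q.1 ≤ q.2},
              (if q.1.1 = q.1.2 then
                (fun p : Fin n × Fin n => (1 / (1 + δ a b)) * (1 / 2) *
                  ((Y b w * (Y a p.1 * Y c p.2 + Y a p.2 * Y c p.1)
                    + Y a w * (Y b p.1 * Y c p.2 + Y b p.2 * Y c p.1)
                    - Y a b * (Y c p.1 * Y p.2 w + Y c p.2 * Y p.1 w)
                    - Y p.1 p.2 * (Y a w * Y b c + Y a c * Y b w)
                    - (Y p.1 a * Y p.2 b + Y p.1 b * Y p.2 a) * Y w c
                    + 2 * Y a b * Y p.1 p.2 * Y w c) * X p.1 p.2 w)) q.1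
               else 2 * (fun p : Fin n × Fin n => (1 / (1 + δ a b)) * (1 / 2) *
                  ((Y b w * (Y a p.1 * Y c p.2 + Y a p.2 * Y c p.1)
                    + Y a w * (Y b p.1 * Y c p.2 + Y b p.2 * Y c p.1)
                    - Y a b * (Y c p.1 * Y p.2 w + Y c p.2 * Y p.1 w)
                    - Y p.1 p.2 * (Y a w * Y b c + Y a c * Y b w)
                    - (Y p.1 a * Y p.2 b + Y p.1 b * Y p.2 a) * Y w c
                    + 2 * Y a b * Y p.1 p.2 * Y w c) * X p.1 p.2 w)) q.1) := by
            apply Finset.sum_congr rfl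
            rintro ⟨⟨u, v'⟩, huv⟩ -
            rw [hB, hXz u v' huv w]
            simp only [hδ]
            by_cases h : u = v' <;> by_cases h2 : a = b <;>
              simp only [h, h2, if_true, if_neg, if_pos, ite_true, ite_false,
                eq_self_iff_true, if_false] <;> ring
        _ = ∑ p : Fin n × Fin n, (fun p : Fin n × Fin n => (1 / (1 + δ a b)) * (1 / 2) *
                  ((Y b w * (Y a p.1 * Y c p.2 + Y a p.2 * Y c p.1)
                    + Y a w * (Y b p.1 * Y c p.2 + Y b p.2 * Y c p.1)
                    - Y a b * (Y c p.1 * Y p.2 w + Y c p.2 * Y p.1 w)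
                    - Y p.1 p.2 * (Y a w * Y b c + Y a c * Y b w)
                    - (Y p.1 a * Y p.2 b + Y p.1 b * Y p.2 a) * Y w c
                    + 2 * Y a b * Y p.1 p.2 * Y w c) * X p.1 p.2 w)) p :=
            half_sum (fun p : Fin n × Fin n => (1 / (1 + δ a b)) * (1 / 2) *
                  ((Y b w * (Y a p.1 * Y c p.2 + Y a p.2 * Y c p.1)
                    + Y a w * (Y b p.1 * Y c p.2 + Y b p.2 * Y c p.1)
                    - Y a b * (Y c p.1 * Y p.2 w + Y c p.2 * Y p.1 w)
                    - Y p.1 p.2 * (Y a w * Y b c + Y a c * Y b w)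
                    - (Y p.1 a * Y p.2 b + Y p.1 b * Y p.2 a) * Y w c
                    + 2 * Y a b * Y p.1 p.2 * Y w c) * X p.1 p.2 w))
              (fun u v' => hg u v')
        _ = (1 / (1 + δ a b)) * (1 / 2) *
            ∑ u, ∑ v,
              (Y b w * (Y a u * Y c v + Y a v * Y c u)
               + Y a w * (Y b u * Y c v + Y b v * Y c u)
               - Y a b * (Y c u * Y v w + Y c v * Y u w)
               - Y u v * (Y a w * Y b c + Y a c * Y b w)
               - (Y u a * Y v b + Y u b * Y v a) * Y w c
               + 2 * Y a b * Y u v * Y w c) * X u v w := by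
            rw [Fintype.sum_prod_type, Finset.mul_sum]
            exact Finset.sum_congr rfl fun u _ => by rw [Finset.mul_sum]
    rw [Finset.sum_congr rfl fun w _ => hw w, ← Finset.mul_sum] at h0
    have hc : (1 / (1 + δ a b)) * (1 / 2) ≠ 0 := by
      rw [hδ]; split_ifs <;> norm_num
    exact (mul_eq_zero.mp h0).resolve_left hc
  -- master equation, for all a b c
  have master : ∀ a b c : Fin n,
      2 * ε a * ε b * ε c * (X a c b + X b c a - X a b c)
      - 2 * (if a = b then ε a * ε c * ((∑ j, ε j * X c j j) - (∑ j, ε j * X j j c)) else 0)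
      - ε a * ε b * ((if b = c then (∑ j, ε j * X j j a) else 0)
                     + (if a = c then (∑ j, ε j * X j j b) else 0)) = 0 := by
    have m1 : ∀ a b : Fin n, a ≤ b → ∀ c : Fin n,
        2 * ε a * ε b * ε c * (X a c b + X b c a - X a b c)
        - 2 * (if a = b then ε a * ε c * ((∑ j, ε j * X c j j) - (∑ j, ε j * X j j c)) else 0)
        - ε a * ε b * ((if b = c then (∑ j, ε j * X j j a) else 0)
                       + (if a = c then (∑ j, ε j * X j j b) else 0)) = 0 := by
      intro a b hab c
      rw [← contract ε Y hY X hXs a b c]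
      exact key a b hab c
    intro a b c
    rcases le_total a b with hab | hba
    · exact m1 a b hab c
    · have h := m1 b a hba c
      by_cases he : a = b
      · subst he; exact h
      · rw [if_neg (fun hh => he hh.symm), hXs a b c] at h
        rw [if_neg he]
        linear_combination h
  have hεne : ∀ i, ε i ≠ 0 := fun i => by rcases hε i with h | h <;> rw [h] <;> norm_num
  -- D1 : all indices distinct
  have D1 : ∀ a b c : Fin n, a ≠ b → b ≠ c → a ≠ c → X a b c = 0 := by
    intro a b c hab hbc hac
    have t1 := master a b c
    simp only [if_neg hab, if_neg hbc, if_neg hac] at t1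
    have t2 := master a c b
    simp only [if_neg hac, if_neg (Ne.symm hbc), if_neg hab] at t2
    rw [hXs b c a] at t2
    have t3 := master b c a
    simp only [if_neg hbc, if_neg (Ne.symm hac), if_neg (Ne.symm hab)] at t3
    rw [hXs a b c, hXs a c b] at t3
    rcases hε a with h1 | h1 <;> rcases hε b with h2 | h2 <;> rcases hε c with h3 | h3 <;>
      rw [h1, h2, h3] at t1 t2 t3 <;> linarith
  -- D2 : X a a c for a ≠ c
  have D2 : ∀ a c : Fin n, a ≠ c → 2 * X a a c = ε a * (∑ j, ε j * X j j c) := by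
    intro a c h
    have h1 := master a c a
    simp only [if_neg h, if_neg (Ne.symm h), eq_self_iff_true, if_true] at h1
    rw [hXs a c a] at h1
    rcases hε a with h2 | h2 <;> rcases hε c with h3 | h3 <;>
      rw [h2, h3] at h1 <;> rw [h2] <;> linarith
  -- D4 : diagonal
  have D4 : ∀ a : Fin n, ε a * X a a a = ∑ j, ε j * X a j j := by
    intro a
    have h1 := master a a a
    simp only [eq_self_iff_true, if_true] at h1
    rcases hε a with h2 | h2 <;> rw [h2] at h1 ⊢ <;> linarith
  -- D3 : X a c a for a ≠ c
  have D3 : ∀ a c : Fin n, a ≠ c →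
      4 * X a c a = 2 * ε a * (∑ j, ε j * X c j j) - ε a * (∑ j, ε j * X j j c) := by
    intro a c h
    have h1 := master a a c
    simp only [if_neg h, eq_self_iff_true, if_true] at h1
    have h2 := D2 a c h
    rcases hε a with h3 | h3 <;> rcases hε c with h4 | h4 <;>
      rw [h3, h4] at h1 <;> rw [h3] at h2 ⊢ <;> linarith
  -- the traces vanish
  have hcard : ∀ c : Fin n, ((univ : Finset (Fin n)).erase c).card = n - 1 := by
    intro c
    rw [Finset.card_erase_of_mem (Finset.mem_univ c), Finset.card_univ, Fintype.card_fin]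
  have hNcast : ((n - 1 : ℕ) : ℝ) = (n : ℝ) - 1 := by
    have h1 : (1 : ℕ) ≤ n := by omega
    rw [Nat.cast_sub h1, Nat.cast_one]
  have hN3 : (3 : ℝ) ≤ (n : ℝ) := by exact_mod_cast hn
  have traces : ∀ c : Fin n,
      (∑ j, ε j * X j j c) = 0 ∧ (∑ j, ε j * X c j j) = 0 := by
    intro c
    set Sc := ∑ j, ε j * X j j c with hSc
    set Tc := ∑ j, ε j * X c j j with hTc
    have e1 : ∑ j ∈ (univ : Finset (Fin n)).erase c, ε j * X j j c
        = ((n : ℝ) - 1) * (1 / 2 * Sc) := by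
      have hterm : ∀ j ∈ (univ : Finset (Fin n)).erase c,
          ε j * X j j c = 1 / 2 * Sc := by
        intro j hj
        have hj' : j ≠ c := (Finset.mem_erase.mp hj).1
        have hd := D2 j c hj'
        have h2 := hε2 j
        calc ε j * X j j c = (1 / 2) * (ε j * (2 * X j j c)) := by ring
          _ = (1 / 2) * (ε j * (ε j * Sc)) := by rw [hd, ← hSc]
          _ = 1 / 2 * Sc := by linear_combination (1 / 2 * Sc) * h2
      rw [Finset.sum_congr rfl hterm, Finset.sum_const, hcard c, nsmul_eq_mul, hNcast]
    have eS : Sc = ((n : ℝ) - 1) * (1 / 2 * Sc) + Tc := by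
      conv_lhs => rw [hSc, ← Finset.sum_erase_add (univ : Finset (Fin n)) _ (Finset.mem_univ c)]
      rw [e1, D4 c, ← hTc]
    have e2 : ∑ j ∈ (univ : Finset (Fin n)).erase c, ε j * X c j j
        = ((n : ℝ) - 1) * (1 / 4 * (2 * Tc - Sc)) := by
      have hterm : ∀ j ∈ (univ : Finset (Fin n)).erase c,
          ε j * X c j j = 1 / 4 * (2 * Tc - Sc) := by
        intro j hj
        have hj' : j ≠ c := (Finset.mem_erase.mp hj).1
        have hd := D3 j c hj'
        have h2 := hε2 j
        calc ε j * X c j j = (1 / 4) * (ε j * (4 * X j c j)) := by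
              rw [hXs j c j]; ring
          _ = (1 / 4) * (ε j * (2 * ε j * Tc - ε j * Sc)) := by
              rw [hd, ← hTc, ← hSc]
          _ = 1 / 4 * (2 * Tc - Sc) := by linear_combination (1 / 4 * (2 * Tc - Sc)) * h2
      rw [Finset.sum_congr rfl hterm, Finset.sum_const, hcard c, nsmul_eq_mul, hNcast]
    have eT : Tc = ((n : ℝ) - 1) * (1 / 4 * (2 * Tc - Sc)) + Tc := by
      conv_lhs => rw [hTc, ← Finset.sum_erase_add (univ : Finset (Fin n)) _ (Finset.mem_univ c)]
      rw [e2, D4 c, ← hTc]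
    have h2T : 2 * Tc = Sc := by
      have hz' : ((n : ℝ) - 1) * (1 / 4 * (2 * Tc - Sc)) = 0 := by linarith
      have hne : (n : ℝ) - 1 ≠ 0 := by linarith
      have := (mul_eq_zero.mp hz').resolve_left hne
      linarith
    have hS0 : Sc = 0 := by
      have hz' : ((n : ℝ) - 2) * Sc = 0 := by linarith
      have hne : (n : ℝ) - 2 ≠ 0 := by linarith
      have := (mul_eq_zero.mp hz').resolve_left hne
      linarith
    exact ⟨hS0, by linarith⟩
  -- all components vanish
  have hall : ∀ a b k : Fin n, X a b k = 0 := by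
    intro a b k
    by_cases hab : a = b
    · subst hab
      by_cases hak : a = k
      · subst hak
        have h1 := D4 a
        rw [(traces a).2] at h1
        exact (mul_eq_zero.mp h1).resolve_left (hεne a)
      · have h1 := D2 a k hak
        rw [(traces k).1, mul_zero] at h1
        linarith
    · by_cases hka : k = a
      · subst hka
        have h1 := D3 k b hab
        rw [(traces b).2, (traces b).1] at h1
        linarith
      · by_cases hkb : k = b
        · subst hkb
          have h1 := D3 k a (fun hh => hab hh.symm)
          rw [(traces a).2, (traces a).1] at h1
          rw [← hXs a k k]
          linarith
        · exact D1 a b k hab (Ne.symm hkb) (Ne.symm hka)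
  funext x
  obtain ⟨⟨⟨a, b⟩, hab⟩, k⟩ := x
  rw [Pi.zero_apply, hXz a b hab k]
  exact hall a b k
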